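/- There are at least 2^{⌊n/2⌋·⌈n/2⌉} labeled chordal graphs on vertex set [n]; in particular at least 2^{n²/4} when n is even. -/

import Mathlib

/-- `G` has no induced cycle of length at least 4, i.e. `G` is chordal. -/
def NoInducedLongCycle {V : Type*} (G : SimpleGraph V) : Prop :=
  ∀ m : ℕ, 4 ≤ m →
    ¬ ∃ f : Fin m → V, Function.Injective f ∧
      ∀ i j : Fin m, G.Adj (f i) (f j) ↔
        ((i.val + 1) % m = j.val ∨ (j.val + 1) % m = i.val)

/-- The split graph with clique on low vertices, cross edges from `S`. -/
def splitG (n : ℕ) (S : Finset (Fin n × Fin n)) : SimpleGraph (Fin n) where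
  Adj u v := u ≠ v ∧ (((u : ℕ) < (n + 1) / 2 ∧ (v : ℕ) < (n + 1) / 2) ∨
    ((u, v) ∈ S ∧ (u : ℕ) < (n + 1) / 2 ∧ (n + 1) / 2 ≤ (v : ℕ)) ∨
    ((v, u) ∈ S ∧ (v : ℕ) < (n + 1) / 2 ∧ (n + 1) / 2 ≤ (u : ℕ)))
  symm := by
    refine ⟨fun u v ⟨h1, h2⟩ => ?_⟩
    exact ⟨h1.symm, by tauto⟩
  loopless := ⟨fun u h => h.1 rfl⟩

attribute [reducible] splitG

lemma splitG_chordal (n : ℕ) (S : Finset (Fin n × Fin n)) :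
    NoInducedLongCycle (splitG n S) := by
  intro m hm ⟨f, hinj, h⟩
  set c := (n + 1) / 2 with hc
  -- consecutive vertices: at least one is low
  have cons : ∀ a b : Fin m, (a.val + 1) % m = b.val →
      ((f a : ℕ) < c ∨ (f b : ℕ) < c) := by
    intro a b hab
    have hadj : (splitG n S).Adj (f a) (f b) := (h a b).mpr (Or.inl hab)
    rcases hadj.2 with h' | h' | h'
    · exact Or.inl h'.1
    · exact Or.inl h'.2.1
    · exact Or.inr h'.2.1
  -- two distinct low vertices on the cycle must be consecutive
  have nonadj : ∀ a b : Fin m, a ≠ b → (f a : ℕ) < c → (f b : ℕ) < c →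
      ((a.val + 1) % m = b.val ∨ (b.val + 1) % m = a.val) := by
    intro a b hab ha hb
    have : (splitG n S).Adj (f a) (f b) :=
      ⟨fun he => hab (hinj he), Or.inl ⟨ha, hb⟩⟩
    exact (h a b).mp this
  set P : Fin m → Prop := fun i => (f i : ℕ) < c with hP
  have i0 : Fin m := ⟨0, by omega⟩
  -- define indices
  let j : ℕ → Fin m := fun k => ⟨k % m, Nat.mod_lt _ (by omega)⟩
  have jval : ∀ k, k < m → (j k).val = k := fun k hk => Nat.mod_eq_of_lt hk
  have jne : ∀ k l, k < m → l < m → k ≠ l → j k ≠ j l := by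
    intro k l hk hl hkl he
    have h2 := congrArg Fin.val he
    simp only [j] at h2
    rw [Nat.mod_eq_of_lt hk, Nat.mod_eq_of_lt hl] at h2
    exact hkl h2
  -- consecutive facts
  have consk : ∀ k l, l < m → k + 1 = l → (P (j k) ∨ P (j l)) := by
    intro k l hl hkl
    apply cons
    rw [jval k (by omega), jval l hl, hkl, Nat.mod_eq_of_lt hl]
  -- nonadjacency facts
  have nonk : ∀ k l, k < m → l < m → k ≠ l → (k + 1) % m ≠ l → (l + 1) % m ≠ k →
      ¬(P (j k) ∧ P (j l)) := by
    intro k l hk hl hkl h1 h2 ⟨pk, pl⟩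
    rcases nonadj (j k) (j l) (jne k l hk hl hkl) pk pl with hh | hh <;>
      rw [jval k hk, jval l hl] at hh
    · exact h1 hh
    · exact h2 hh
  rcases Nat.lt_or_ge m 5 with hm5 | hm5
  · -- m = 4
    have hm4 : m = 4 := by omega
    subst hm4
    have c01 := consk 0 1 (by omega) rfl
    have c12 := consk 1 2 (by omega) rfl
    have c23 := consk 2 3 (by omega) rfl
    have c30 : P (j 3) ∨ P (j 0) := by
      have := cons (j 3) (j 0) ?_
      · exact this
      · rw [jval 3 (by omega), jval 0 (by omega)]
    have n02 := nonk 0 2 (by omega) (by omega) (by omega) (by omega) (by omega)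
    have n13 := nonk 1 3 (by omega) (by omega) (by omega) (by omega) (by omega)
    tauto
  · -- m ≥ 5
    have c01 := consk 0 1 (by omega) rfl
    have c12 := consk 1 2 (by omega) rfl
    have c34 := consk 3 4 (by omega) rfl
    have h5 : 5 % m ≠ 1 ∧ 5 % m ≠ 2 := by
      rcases Nat.lt_or_ge m 6 with h6 | h6
      · have : m = 5 := by omega
        subst this; omega
      · rw [Nat.mod_eq_of_lt (by omega)]; omega
    have n02 := nonk 0 2 (by omega) (by omega) (by omega)
      (by rw [Nat.mod_eq_of_lt (by omega : (1:ℕ) < m)]; omega)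
      (by rw [Nat.mod_eq_of_lt (by omega : (3:ℕ) < m)]; omega)
    have n13 := nonk 1 3 (by omega) (by omega) (by omega)
      (by rw [Nat.mod_eq_of_lt (by omega : (2:ℕ) < m)]; omega)
      (by rw [Nat.mod_eq_of_lt (by omega : (4:ℕ) < m)]; omega)
    have n14 := nonk 1 4 (by omega) (by omega) (by omega)
      (by rw [Nat.mod_eq_of_lt (by omega : (2:ℕ) < m)]; omega) h5.1
    have n24 := nonk 2 4 (by omega) (by omega) (by omega)
      (by rw [Nat.mod_eq_of_lt (by omega : (3:ℕ) < m)]; omega) h5.2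
    rcases c12 with p1 | p2
    · have np3 : ¬ P (j 3) := fun p3 => n13 ⟨p1, p3⟩
      have p4 : P (j 4) := c34.resolve_left np3
      exact n14 ⟨p1, p4⟩
    · have np0 : ¬ P (j 0) := fun p0 => n02 ⟨p0, p2⟩
      have p1 : P (j 1) := c01.resolve_left np0
      have np4 : ¬ P (j 4) := fun p4 => n24 ⟨p2, p4⟩
      have p3 : P (j 3) := by
        rcases c34 with p3 | p4
        · exact p3
        · exact absurd p4 np4
      exact n13 ⟨p1, p3⟩

/-- The set of possible cross pairs. -/
def crossSet (n : ℕ) : Finset (Fin n × Fin n) :=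
  Finset.univ.filter (fun p => (p.1 : ℕ) < (n + 1) / 2 ∧ (n + 1) / 2 ≤ (p.2 : ℕ))

lemma crossSet_card (n : ℕ) : (crossSet n).card = n / 2 * ((n + 1) / 2) := by
  set c := (n + 1) / 2 with hc
  have hcn : c ≤ n := by omega
  have hsplit : crossSet n =
      (Finset.univ.filter (fun u : Fin n => (u : ℕ) < c)) ×ˢ
      (Finset.univ.filter (fun v : Fin n => c ≤ (v : ℕ))) := by
    ext p
    simp [crossSet, Finset.mem_product, Finset.mem_filter, hc]
  rw [hsplit, Finset.card_product]
  have e1 : {v : Fin n // (v : ℕ) < c} ≃ Fin c :=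
    { toFun := fun v => ⟨v.1.val, v.2⟩
      invFun := fun i => ⟨⟨i.val, lt_of_lt_of_le i.2 hcn⟩, i.2⟩
      left_inv := fun v => rfl
      right_inv := fun i => rfl }
  have e2 : {v : Fin n // c ≤ (v : ℕ)} ≃ Fin (n - c) :=
    { toFun := fun v => ⟨v.1.val - c, by have := v.1.isLt; have := v.2; omega⟩
      invFun := fun i => ⟨⟨i.val + c, by have := i.isLt; omega⟩, by simp⟩
      left_inv := fun v => by
        apply Subtype.ext; apply Fin.ext
        have := v.2; simp; omega
      right_inv := fun i => by apply Fin.ext; simp }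
  have h1 : (Finset.univ.filter (fun u : Fin n => (u : ℕ) < c)).card = c := by
    rw [← Fintype.card_subtype]
    exact (Fintype.card_congr e1).trans (Fintype.card_fin c)
  have h2 : (Finset.univ.filter (fun v : Fin n => c ≤ (v : ℕ))).card = n - c := by
    rw [← Fintype.card_subtype]
    exact (Fintype.card_congr e2).trans (Fintype.card_fin (n - c))
  rw [h1, h2]
  have : n - c = n / 2 := by omega
  rw [this]
  ring

lemma splitG_injOn (n : ℕ) : Set.InjOn (splitG n) ↑(crossSet n).powerset := by
  intro S hS T hT hST
  simp only [Finset.coe_powerset, Set.mem_preimage, Set.mem_powerset_iff,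
    Finset.coe_subset] at hS hT
  have key : ∀ u v : Fin n, (splitG n S).Adj u v ↔ (splitG n T).Adj u v := by
    rw [hST]; intro u v; rfl
  ext ⟨u, v⟩
  constructor
  · intro hmem
    have hcr := hS hmem
    simp only [crossSet, Finset.mem_filter] at hcr
    obtain ⟨-, hu, hv⟩ := hcr
    have hadj : (splitG n S).Adj u v :=
      ⟨by intro he; rw [he] at hu; omega, Or.inr (Or.inl ⟨hmem, hu, hv⟩)⟩
    rcases ((key u v).mp hadj).2 with h' | h' | h'
    · omega
    · exact h'.1
    · omega
  · intro hmem
    have hcr := hT hmem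
    simp only [crossSet, Finset.mem_filter] at hcr
    obtain ⟨-, hu, hv⟩ := hcr
    have hadj : (splitG n T).Adj u v :=
      ⟨by intro he; rw [he] at hu; omega, Or.inr (Or.inl ⟨hmem, hu, hv⟩)⟩
    rcases ((key u v).mpr hadj).2 with h' | h' | h'
    · omega
    · exact h'.1
    · omega

/-- there are at least 2^(⌊n/2⌋·⌈n/2⌉) labeled chordal graphs on [n]. -/
theorem chordal_count_lower (n : ℕ) :
    2 ^ (n / 2 * ((n + 1) / 2)) ≤
      Set.ncard {G : SimpleGraph (Fin n) | NoInducedLongCycle G} := by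
  classical
  set D : Finset (SimpleGraph (Fin n)) := (crossSet n).powerset.image (splitG n) with hD
  have hcard : D.card = 2 ^ (n / 2 * ((n + 1) / 2)) := by
    rw [hD, Finset.card_image_of_injOn (splitG_injOn n), Finset.card_powerset,
      crossSet_card]
  have hsub : ↑D ⊆ {G : SimpleGraph (Fin n) | NoInducedLongCycle G} := by
    intro G hG
    simp only [hD, Finset.coe_image, Set.mem_image] at hG
    obtain ⟨S, -, rfl⟩ := hG
    exact splitG_chordal n S
  calc 2 ^ (n / 2 * ((n + 1) / 2)) = (↑D : Set (SimpleGraph (Fin n))).ncard := by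
        rw [Set.ncard_coe_finset, hcard]
    _ ≤ _ := Set.ncard_le_ncard hsub (Set.toFinite _)
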